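/- Let h* ≥ 0, R > 0, 0 < a ≤ R/e, and S : [0,∞) → [0,∞) non-increasing with S = 1 on [0,1] and Ŝ = ∫₀^∞ tS(t)max{1,|log t|}dt < ∞. Define ξ(t) = 2 S(t/a) and ψ(t) = ∫₀^t (e^{h*s}/s)[∫₀^s e^{-h*σ}σ ξ(σ)dσ]ds. Then ψ(t) ≤ 4 e^{h*R} Ŝ a² log(R/a) for all t ∈ (0,R]. -/

import Mathlib

open MeasureTheory

set_option maxHeartbeats 1000000 in
/-- L∞ bound in case k = 2. With ξ(t) = 2S(t/a) and
ψ(t) = ∫₀^t (e^{h*s}/s)[∫₀^s e^{-h*σ}σξ(σ)dσ]ds, where h* ≥ 0, R > 0, 0 < a ≤ R/e,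
S non-increasing, S = 1 on [0,1] and Ŝ = ∫₀^∞ tS(t)max{1,|log t|}dt < ∞, one has
ψ(t) ≤ 4 e^{h*R} Ŝ a² log(R/a) for all t ∈ (0,R]. -/
theorem stmt8 (hstar R a : ℝ) (hhs : 0 ≤ hstar) (hR : 0 < R) (ha : 0 < a)
    (haR : a ≤ R / Real.exp 1)
    (S : ℝ → ℝ) (hSnn : ∀ t, 0 ≤ t → 0 ≤ S t) (hSanti : AntitoneOn S (Set.Ici 0))
    (hS1 : ∀ t ∈ Set.Icc (0 : ℝ) 1, S t = 1)
    (hSint : IntegrableOn (fun t => t * S t * max 1 |Real.log t|) (Set.Ioi 0)) :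
    ∀ t ∈ Set.Ioc (0 : ℝ) R,
      (∫ s in Set.Ioc (0 : ℝ) t, (Real.exp (hstar * s) / s) *
          ∫ σ in Set.Ioc (0 : ℝ) s, Real.exp (-hstar * σ) * σ * (2 * S (σ / a))) ≤
        4 * Real.exp (hstar * R) *
          (∫ u in Set.Ioi (0 : ℝ), u * S u * max 1 |Real.log u|) *
          a ^ 2 * Real.log (R / a) := by
  intro t ht
  obtain ⟨ht0, htR⟩ := ht
  have he : (0:ℝ) < Real.exp 1 := Real.exp_pos 1
  have hea : Real.exp 1 ≤ R / a := by
    rw [le_div_iff₀ ha]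
    calc Real.exp 1 * a = a * Real.exp 1 := mul_comm _ _
      _ ≤ R := by rwa [← le_div_iff₀ he]
  have hRa : 0 < R / a := lt_of_lt_of_le he hea
  have hL1 : 1 ≤ Real.log (R / a) := (Real.le_log_iff_exp_le hRa).mpr hea
  have hS0 : S 0 = 1 := hS1 0 ⟨le_refl 0, zero_le_one⟩
  have hSle1 : ∀ x : ℝ, 0 ≤ x → S x ≤ 1 := fun x hx =>
    le_of_le_of_eq (hSanti Set.self_mem_Ici hx hx) hS0
  set Shat := ∫ u in Set.Ioi (0:ℝ), u * S u * max 1 |Real.log u| with hShat_def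
  -- measurability of S and of σ ↦ S (σ/a)
  have hmS : AEMeasurable S (volume.restrict (Set.Ioi (0:ℝ))) :=
    aemeasurable_restrict_of_antitoneOn measurableSet_Ioi
      (hSanti.mono Set.Ioi_subset_Ici_self)
  have hanti2 : AntitoneOn (fun σ : ℝ => S (σ / a)) (Set.Ici (0:ℝ)) := by
    intro x hx y hy hxy
    exact hSanti (Set.mem_Ici.mpr (div_nonneg hx ha.le))
      (Set.mem_Ici.mpr (div_nonneg hy ha.le)) (by gcongr)
  have hmS2 : AEMeasurable (fun σ : ℝ => S (σ / a)) (volume.restrict (Set.Ioi (0:ℝ))) :=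
    aemeasurable_restrict_of_antitoneOn measurableSet_Ioi
      (hanti2.mono Set.Ioi_subset_Ici_self)
  -- integrability of u * S u
  have hFint : IntegrableOn (fun u : ℝ => u * S u) (Set.Ioi (0:ℝ)) := by
    refine hSint.mono' (aemeasurable_id.mul hmS).aestronglyMeasurable ?_
    filter_upwards [ae_restrict_mem measurableSet_Ioi] with u hu
    have hu0 : (0:ℝ) < u := hu
    have h1 : 0 ≤ u * S u := mul_nonneg hu0.le (hSnn u hu0.le)
    rw [Real.norm_eq_abs, abs_of_nonneg h1]
    nlinarith [le_max_left 1 |Real.log u|]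
  set J := ∫ u in Set.Ioi (0:ℝ), u * S u with hJdef
  have hJnn : 0 ≤ J := setIntegral_nonneg measurableSet_Ioi
    (fun u hu => mul_nonneg (le_of_lt hu) (hSnn u (le_of_lt hu)))
  have hJle : J ≤ Shat := by
    refine setIntegral_mono_on hFint hSint measurableSet_Ioi (fun u hu => ?_)
    have hu0 : (0:ℝ) < u := hu
    have h1 : 0 ≤ u * S u := mul_nonneg hu0.le (hSnn u hu0.le)
    nlinarith [le_max_left 1 |Real.log u|]
  have hShat_nn : 0 ≤ Shat := hJnn.trans hJle
  -- Shat ≥ 1/2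
  have hhalf : (1:ℝ)/2 ≤ Shat := by
    have h2 : ∫ u in Set.Ioc (0:ℝ) 1, u ≤
        ∫ u in Set.Ioc (0:ℝ) 1, u * S u * max 1 |Real.log u| := by
      refine setIntegral_mono_on (continuous_id.integrableOn_Ioc)
        (MeasureTheory.IntegrableOn.mono_set hSint Set.Ioc_subset_Ioi_self) measurableSet_Ioc (fun u hu => ?_)
      rw [hS1 u ⟨hu.1.le, hu.2⟩, mul_one]
      nlinarith [le_max_left 1 |Real.log u|, hu.1]
    have h3 : ∫ u in Set.Ioc (0:ℝ) 1, u = 1/2 := by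
      rw [← intervalIntegral.integral_of_le zero_le_one, integral_id]; norm_num
    have h4 : ∫ u in Set.Ioc (0:ℝ) 1, u * S u * max 1 |Real.log u| ≤ Shat := by
      refine setIntegral_mono_set hSint ?_ (HasSubset.Subset.eventuallyLE Set.Ioc_subset_Ioi_self)
      filter_upwards [ae_restrict_mem measurableSet_Ioi] with u hu
      have hu0 : (0:ℝ) < u := hu
      have := hSnn u hu0.le
      have := le_max_left 1 |Real.log u|
      positivity
    linarith
  -- change of variables: ∫ σ S(σ/a) over Ioi 0 equals a² J
  have hGeq : (fun σ : ℝ => σ * S (σ / a)) = fun σ => a * ((a⁻¹ * σ) * S (a⁻¹ * σ)) := by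
    funext σ
    rw [div_eq_inv_mul, ← mul_assoc, mul_inv_cancel_left₀ ha.ne']
  have hGint : IntegrableOn (fun σ : ℝ => σ * S (σ / a)) (Set.Ioi (0:ℝ)) := by
    rw [hGeq]
    exact (((integrableOn_Ioi_comp_mul_left_iff (fun u : ℝ => u * S u) 0
      (inv_pos.mpr ha)).mpr (by simpa using hFint)).const_mul a)
  have hGval : ∫ σ in Set.Ioi (0:ℝ), σ * S (σ / a) = a^2 * J := by
    rw [hGeq, MeasureTheory.integral_const_mul,
      integral_comp_mul_left_Ioi (fun u : ℝ => u * S u) 0 (inv_pos.mpr ha),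
      inv_inv, mul_zero, smul_eq_mul, ← hJdef]
    ring
  -- properties of the inner integrand
  have hf_nn : ∀ σ : ℝ, 0 ≤ σ → 0 ≤ Real.exp (-hstar * σ) * σ * (2 * S (σ / a)) := by
    intro σ hσ
    have := hSnn (σ/a) (div_nonneg hσ ha.le)
    positivity
  have hf_le : ∀ σ : ℝ, 0 ≤ σ →
      Real.exp (-hstar * σ) * σ * (2 * S (σ / a)) ≤ 2 * (σ * S (σ / a)) := by
    intro σ hσ
    have h1 : Real.exp (-hstar * σ) ≤ 1 := Real.exp_le_one_iff.mpr (by nlinarith [mul_nonneg hhs hσ])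
    have h2 := hSnn (σ/a) (div_nonneg hσ ha.le)
    have h3 := Real.exp_nonneg (-hstar * σ)
    nlinarith [mul_nonneg (mul_nonneg hσ h2) (sub_nonneg.mpr h1)]
  have hf_le_lin : ∀ σ : ℝ, 0 ≤ σ →
      Real.exp (-hstar * σ) * σ * (2 * S (σ / a)) ≤ 2 * σ := by
    intro σ hσ
    have h1 : Real.exp (-hstar * σ) ≤ 1 := Real.exp_le_one_iff.mpr (by nlinarith [mul_nonneg hhs hσ])
    have h2 := hSnn (σ/a) (div_nonneg hσ ha.le)
    have h3 := Real.exp_nonneg (-hstar * σ)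
    have h4 := hSle1 (σ/a) (div_nonneg hσ ha.le)
    nlinarith [mul_nonneg (mul_nonneg hσ h2) (sub_nonneg.mpr h1),
      mul_nonneg hσ (sub_nonneg.mpr h4)]
  have hf_meas : AEMeasurable (fun σ : ℝ => Real.exp (-hstar * σ) * σ * (2 * S (σ / a)))
      (volume.restrict (Set.Ioi (0:ℝ))) := by
    exact (((measurable_id.const_mul (-hstar)).exp.mul measurable_id).aemeasurable.mul
      (aemeasurable_const.mul hmS2))
  have hf_int : IntegrableOn (fun σ : ℝ => Real.exp (-hstar * σ) * σ * (2 * S (σ / a)))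
      (Set.Ioi (0:ℝ)) := by
    refine (hGint.const_mul 2).mono' hf_meas.aestronglyMeasurable ?_
    filter_upwards [ae_restrict_mem measurableSet_Ioi] with σ hσ
    have hσ0 : (0:ℝ) < σ := hσ
    rw [Real.norm_eq_abs, abs_of_nonneg (hf_nn σ hσ0.le)]
    exact hf_le σ hσ0.le
  -- nonnegativity and bounds for the inner integral
  have hI_nn : ∀ s : ℝ, 0 ≤ ∫ σ in Set.Ioc (0:ℝ) s,
      Real.exp (-hstar * σ) * σ * (2 * S (σ / a)) := fun s =>
    setIntegral_nonneg measurableSet_Ioc (fun σ hσ => hf_nn σ hσ.1.le)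
  have hI_le_all : ∀ s : ℝ, (∫ σ in Set.Ioc (0:ℝ) s,
      Real.exp (-hstar * σ) * σ * (2 * S (σ / a))) ≤ 2 * (a^2 * J) := by
    intro s
    calc (∫ σ in Set.Ioc (0:ℝ) s, Real.exp (-hstar * σ) * σ * (2 * S (σ / a)))
        ≤ ∫ σ in Set.Ioc (0:ℝ) s, 2 * (σ * S (σ / a)) :=
          setIntegral_mono_on (MeasureTheory.IntegrableOn.mono_set hf_int Set.Ioc_subset_Ioi_self)
            (MeasureTheory.IntegrableOn.mono_set (hGint.const_mul 2) Set.Ioc_subset_Ioi_self) measurableSet_Ioc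
            (fun σ hσ => hf_le σ hσ.1.le)
      _ ≤ ∫ σ in Set.Ioi (0:ℝ), 2 * (σ * S (σ / a)) := by
          refine setIntegral_mono_set (hGint.const_mul 2) ?_
            (HasSubset.Subset.eventuallyLE Set.Ioc_subset_Ioi_self)
          filter_upwards [ae_restrict_mem measurableSet_Ioi] with σ hσ
          have hσ0 : (0:ℝ) < σ := hσ
          have := hSnn (σ/a) (div_nonneg hσ0.le ha.le)
          positivity
      _ = 2 * (a^2 * J) := by rw [MeasureTheory.integral_const_mul, hGval]
  have hI_le_sq : ∀ s : ℝ, 0 < s → (∫ σ in Set.Ioc (0:ℝ) s,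
      Real.exp (-hstar * σ) * σ * (2 * S (σ / a))) ≤ s^2 := by
    intro s hs
    calc (∫ σ in Set.Ioc (0:ℝ) s, Real.exp (-hstar * σ) * σ * (2 * S (σ / a)))
        ≤ ∫ σ in Set.Ioc (0:ℝ) s, 2 * σ :=
          setIntegral_mono_on (MeasureTheory.IntegrableOn.mono_set hf_int Set.Ioc_subset_Ioi_self)
            ((continuous_const.mul continuous_id).integrableOn_Ioc) measurableSet_Ioc
            (fun σ hσ => hf_le_lin σ hσ.1.le)
      _ = s^2 := by
          rw [← intervalIntegral.integral_of_le hs.le, intervalIntegral.integral_const_mul,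
            integral_id]
          ring
  -- outer bound
  set C := Real.exp (hstar * R) with hCdef
  have hC : 0 < C := Real.exp_pos _
  set m : ℝ → ℝ := fun s => if s ≤ a then C * s else C * (2 * (a^2 * J)) / s with hmdef
  have hgm : ∀ s ∈ Set.Ioc (0:ℝ) t,
      (Real.exp (hstar * s) / s) * (∫ σ in Set.Ioc (0:ℝ) s,
        Real.exp (-hstar * σ) * σ * (2 * S (σ / a))) ≤ m s := by
    intro s hs
    have hs0 : (0:ℝ) < s := hs.1
    have hexp : Real.exp (hstar * s) ≤ C := by
      apply Real.exp_le_exp.mpr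
      have : s ≤ R := hs.2.trans htR
      nlinarith
    have hdiv : Real.exp (hstar * s) / s ≤ C / s := by gcongr
    have hdivnn : 0 ≤ Real.exp (hstar * s) / s := by positivity
    by_cases hcase : s ≤ a
    · have : (Real.exp (hstar * s) / s) * (∫ σ in Set.Ioc (0:ℝ) s,
          Real.exp (-hstar * σ) * σ * (2 * S (σ / a))) ≤ (C / s) * s^2 :=
        mul_le_mul hdiv (hI_le_sq s hs0) (hI_nn s) (by positivity)
      simp only [hmdef, if_pos hcase]
      calc _ ≤ (C / s) * s^2 := this
        _ = C * s := by field_simp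
    · have : (Real.exp (hstar * s) / s) * (∫ σ in Set.Ioc (0:ℝ) s,
          Real.exp (-hstar * σ) * σ * (2 * S (σ / a))) ≤ (C / s) * (2 * (a^2 * J)) :=
        mul_le_mul hdiv (hI_le_all s) (hI_nn s) (by positivity)
      simp only [hmdef, if_neg hcase]
      calc _ ≤ (C / s) * (2 * (a^2 * J)) := this
        _ = C * (2 * (a^2 * J)) / s := by ring
  -- integrability of m on Ioc 0 t, and value bound of its integral
  have hm1 : IntegrableOn (fun s : ℝ => C * s) (Set.Ioc (0:ℝ) t) :=
    (continuous_const.mul continuous_id).integrableOn_Ioc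
  have hIm : IntegrableOn m (Set.Ioc (0:ℝ) t) ∧
      (∫ s in Set.Ioc (0:ℝ) t, m s) ≤ C * (a^2/2) + C * (2 * (a^2 * J)) * Real.log (R/a) := by
    have hlogRa_nn : 0 ≤ Real.log (R/a) := le_trans zero_le_one hL1
    by_cases hta : t ≤ a
    · have heq : Set.EqOn (fun s : ℝ => C * s) m (Set.Ioc (0:ℝ) t) := by
        intro s hs
        simp only [hmdef, if_pos (hs.2.trans hta)]
      have hint : IntegrableOn m (Set.Ioc (0:ℝ) t) := hm1.congr_fun heq measurableSet_Ioc
      refine ⟨hint, ?_⟩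
      have : (∫ s in Set.Ioc (0:ℝ) t, m s) = ∫ s in Set.Ioc (0:ℝ) t, C * s :=
        (setIntegral_congr_fun measurableSet_Ioc heq).symm
      rw [this, ← intervalIntegral.integral_of_le ht0.le, intervalIntegral.integral_const_mul,
        integral_id]
      have h1 : t^2 ≤ a^2 := by nlinarith
      have h2 : 0 ≤ C * (2 * (a^2 * J)) * Real.log (R/a) :=
        mul_nonneg (mul_nonneg hC.le (mul_nonneg (by norm_num)
          (mul_nonneg (sq_nonneg a) hJnn))) hlogRa_nn
      nlinarith [mul_le_mul_of_nonneg_left h1 hC.le]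
    · push_neg at hta
      have hsplit : Set.Ioc (0:ℝ) t = Set.Ioc 0 a ∪ Set.Ioc a t :=
        (Set.Ioc_union_Ioc_eq_Ioc ha.le hta.le).symm
      have heq1 : Set.EqOn (fun s : ℝ => C * s) m (Set.Ioc (0:ℝ) a) := by
        intro s hs; simp only [hmdef, if_pos hs.2]
      have heq2 : Set.EqOn (fun s : ℝ => C * (2 * (a^2 * J)) / s) m (Set.Ioc a t) := by
        intro s hs; simp only [hmdef, if_neg (not_le.mpr hs.1)]
      have hint1 : IntegrableOn m (Set.Ioc (0:ℝ) a) :=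
        ((continuous_const.mul continuous_id).integrableOn_Ioc).congr_fun heq1 measurableSet_Ioc
      have hint2' : IntegrableOn (fun s : ℝ => C * (2 * (a^2 * J)) / s) (Set.Ioc a t) := by
        rw [← intervalIntegrable_iff_integrableOn_Ioc_of_le hta.le]
        apply ContinuousOn.intervalIntegrable
        apply ContinuousOn.div continuousOn_const continuousOn_id
        intro x hx
        rw [Set.uIcc_of_le hta.le] at hx
        exact ne_of_gt (lt_of_lt_of_le ha hx.1)
      have hint2 : IntegrableOn m (Set.Ioc a t) := hint2'.congr_fun heq2 measurableSet_Ioc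
      have hint : IntegrableOn m (Set.Ioc (0:ℝ) t) := by
        rw [hsplit]; exact hint1.union hint2
      refine ⟨hint, ?_⟩
      have hdisj : Disjoint (Set.Ioc (0:ℝ) a) (Set.Ioc a t) := Set.Ioc_disjoint_Ioc_of_le le_rfl
      have hval : (∫ s in Set.Ioc (0:ℝ) t, m s) =
          (∫ s in Set.Ioc (0:ℝ) a, m s) + ∫ s in Set.Ioc a t, m s := by
        rw [hsplit]
        exact setIntegral_union hdisj measurableSet_Ioc hint1 hint2
      have hv1 : (∫ s in Set.Ioc (0:ℝ) a, m s) = C * (a^2/2) := by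
        rw [← setIntegral_congr_fun measurableSet_Ioc heq1,
          ← intervalIntegral.integral_of_le ha.le, intervalIntegral.integral_const_mul,
          integral_id]
        ring
      have hv2 : (∫ s in Set.Ioc a t, m s) = C * (2 * (a^2 * J)) * Real.log (t/a) := by
        rw [← setIntegral_congr_fun measurableSet_Ioc heq2,
          ← intervalIntegral.integral_of_le hta.le]
        have h0 : (0:ℝ) ∉ Set.uIcc a t := by
          rw [Set.uIcc_of_le hta.le]
          intro h
          exact absurd h.1 (not_le.mpr ha)
        have : ∀ s : ℝ, C * (2 * (a^2 * J)) / s = C * (2 * (a^2 * J)) * (1/s) := by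
          intro s; ring
        simp_rw [this]
        rw [intervalIntegral.integral_const_mul, integral_one_div h0]
      have hlog : Real.log (t/a) ≤ Real.log (R/a) := by
        apply Real.log_le_log (by positivity)
        gcongr
      rw [hval, hv1, hv2]
      have hcoef : 0 ≤ C * (2 * (a^2 * J)) := by positivity
      nlinarith [mul_le_mul_of_nonneg_left hlog hcoef]
  obtain ⟨hm_int, hm_val⟩ := hIm
  -- measurability/integrability of the outer integrand
  have hfIcc : IntegrableOn (fun σ : ℝ => Real.exp (-hstar * σ) * σ * (2 * S (σ / a)))
      (Set.Icc 0 t) := by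
    rw [integrableOn_Icc_iff_integrableOn_Ioc]
    exact MeasureTheory.IntegrableOn.mono_set hf_int Set.Ioc_subset_Ioi_self
  have hprim : ContinuousOn (fun s : ℝ => ∫ σ in Set.Ioc (0:ℝ) s,
      Real.exp (-hstar * σ) * σ * (2 * S (σ / a))) (Set.Icc 0 t) :=
    intervalIntegral.continuousOn_primitive hfIcc
  have hg_cont : ContinuousOn (fun s : ℝ => (Real.exp (hstar * s) / s) *
      ∫ σ in Set.Ioc (0:ℝ) s, Real.exp (-hstar * σ) * σ * (2 * S (σ / a)))
      (Set.Ioc 0 t) := by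
    apply ContinuousOn.mul
    · apply ContinuousOn.div
      · exact (Real.continuous_exp.comp (continuous_const.mul continuous_id)).continuousOn
      · exact continuousOn_id
      · intro x hx; exact ne_of_gt hx.1
    · exact hprim.mono Set.Ioc_subset_Icc_self
  have hg_int : IntegrableOn (fun s : ℝ => (Real.exp (hstar * s) / s) *
      ∫ σ in Set.Ioc (0:ℝ) s, Real.exp (-hstar * σ) * σ * (2 * S (σ / a)))
      (Set.Ioc 0 t) := by
    refine hm_int.mono' (hg_cont.aestronglyMeasurable measurableSet_Ioc) ?_
    filter_upwards [ae_restrict_mem measurableSet_Ioc] with s hs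
    have hs0 : (0:ℝ) < s := hs.1
    have hgnn : 0 ≤ (Real.exp (hstar * s) / s) *
        ∫ σ in Set.Ioc (0:ℝ) s, Real.exp (-hstar * σ) * σ * (2 * S (σ / a)) :=
      mul_nonneg (by positivity) (hI_nn s)
    rw [Real.norm_eq_abs, abs_of_nonneg hgnn]
    exact hgm s hs
  -- conclude
  calc (∫ s in Set.Ioc (0:ℝ) t, (Real.exp (hstar * s) / s) *
        ∫ σ in Set.Ioc (0:ℝ) s, Real.exp (-hstar * σ) * σ * (2 * S (σ / a)))
      ≤ ∫ s in Set.Ioc (0:ℝ) t, m s :=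
        setIntegral_mono_on hg_int hm_int measurableSet_Ioc hgm
    _ ≤ C * (a^2/2) + C * (2 * (a^2 * J)) * Real.log (R/a) := hm_val
    _ ≤ 4 * C * Shat * a^2 * Real.log (R/a) := by
        have hL0 : (0:ℝ) ≤ Real.log (R/a) := le_trans zero_le_one hL1
        have h1 : C * (2 * (a^2 * J)) * Real.log (R/a) ≤
            C * (2 * (a^2 * Shat)) * Real.log (R/a) := by
          have h0 : C * 2 * a^2 * J ≤ C * 2 * a^2 * Shat :=
            mul_le_mul_of_nonneg_left hJle (by positivity)
          nlinarith [mul_le_mul_of_nonneg_right h0 hL0]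
        have h2 : C * (a^2/2) ≤ C * (2 * (a^2 * Shat)) * Real.log (R/a) := by
          have hSL : (1:ℝ) ≤ 2 * Shat * Real.log (R/a) := by nlinarith
          nlinarith [sq_nonneg a, hC.le, mul_nonneg (mul_nonneg hC.le (sq_nonneg a)) hL0]
        nlinarith [hC.le, sq_nonneg a, hShat_nn, hL0]
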